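/- Consider the nested recursion exp(V(k)/μ(c(k))) = Σ_{a∈N(k)} exp((v(a|k) + V(a))/μ(c(k))) on the tiered Binary-Choice DAG, where the scale at node p^c_j depends only on the count c via μ(c) > 0, and on the Multi-Choice DAG with the same scale rule and same alternative order. Then for every node p^c_j present in both DAGs, the value functions coincide: V^BiC(p^c_j) = V^MuC(p^c_j). -/

import Mathlib

/-- Exponentiated nested value function on the Binary-Choice DAG:
`zB j c = exp(V^BiC(p^c_j) / μ c)`.  At tier `m` the terminal value is `1` if
`c ∈ [L,U]` and `0` (i.e. `V = -∞`) otherwise; for `j < m` the node `p^c_j`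
has a reject arc to `p^c_{j+1}` (utility `0`) and a select arc to
`p^{c+1}_{j+1}` (utility `v (j+1)`), with node scale `μ c` depending only on
the count `c`. -/
noncomputable def zBiC (v μ : ℕ → ℝ) (L U m : ℕ) : ℕ → ℕ → ℝ
  | j, c =>
    if h : j < m then
      zBiC v μ L U m (j + 1) c
        + Real.exp (v (j + 1) / μ c) * (zBiC v μ L U m (j + 1) (c + 1)) ^ (μ (c + 1) / μ c)
    else if L ≤ c ∧ c ≤ U then 1 else 0
  termination_by j _ => m - j
  decreasing_by all_goals omega

/-- Exponentiated nested value function on the Multi-Choice DAG: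
`zMuC j c = exp(V^MuC(p^c_j) / μ c)`.  Node `p^c_j` has arcs to `p^{c+1}_{j'}`
(utility `v j'`) for `j < j' ≤ m`, plus a zero-utility arc to the destination
when `c ∈ [L,U]`; node scale `μ c` depends only on the count `c`. -/
noncomputable def zMuC (v μ : ℕ → ℝ) (L U m : ℕ) : ℕ → ℕ → ℝ
  | j, c =>
    (∑ j' ∈ (Finset.Icc (j + 1) m).attach,
        Real.exp (v j'.1 / μ c) * (zMuC v μ L U m j'.1 (c + 1)) ^ (μ (c + 1) / μ c))
      + (if L ≤ c ∧ c ≤ U then 1 else 0)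
  termination_by j _ => m - j
  decreasing_by
    all_goals
      have := Finset.mem_Icc.mp j'.2
      omega

lemma zMuC_eq (v μ : ℕ → ℝ) (L U m j c : ℕ) :
    zMuC v μ L U m j c =
      (∑ j' ∈ Finset.Icc (j + 1) m,
          Real.exp (v j' / μ c) * (zMuC v μ L U m j' (c + 1)) ^ (μ (c + 1) / μ c))
        + (if L ≤ c ∧ c ≤ U then 1 else 0) := by
  rw [zMuC]
  congr 1
  exact Finset.sum_attach (Finset.Icc (j + 1) m)
    (fun j' => Real.exp (v j' / μ c) * (zMuC v μ L U m j' (c + 1)) ^ (μ (c + 1) / μ c))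

/-- Unrolling the BiC recursion along the reject arcs. -/
lemma zBiC_unroll (v μ : ℕ → ℝ) (L U m : ℕ) :
    ∀ n j c, m - j ≤ n →
      zBiC v μ L U m j c =
        (∑ j' ∈ Finset.Icc (j + 1) m,
            Real.exp (v j' / μ c) * (zBiC v μ L U m j' (c + 1)) ^ (μ (c + 1) / μ c))
          + (if L ≤ c ∧ c ≤ U then 1 else 0) := by
  intro n
  induction n with
  | zero =>
      intro j c h
      have hjm : m ≤ j := by omega
      rw [zBiC, dif_neg (by omega), Finset.Icc_eq_empty (by omega), Finset.sum_empty, zero_add]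
  | succ n ih =>
      intro j c h
      by_cases hjm : j < m
      · rw [zBiC, dif_pos hjm, ih (j + 1) c (by omega)]
        have hins : Finset.Icc (j + 1) m = insert (j + 1) (Finset.Icc (j + 2) m) := by
          ext x
          simp [Finset.mem_Icc, Finset.mem_insert]
          omega
        rw [hins, Finset.sum_insert (by simp)]
        ring
      · rw [zBiC, dif_neg hjm, Finset.Icc_eq_empty (by omega)]
        simp

lemma zBiC_eq_zMuC (v μ : ℕ → ℝ) (L U m : ℕ) :
    ∀ n j c, m - j ≤ n → zBiC v μ L U m j c = zMuC v μ L U m j c := by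
  intro n
  induction n with
  | zero =>
      intro j c h
      rw [zBiC_unroll v μ L U m 0 j c h, zMuC_eq,
        Finset.Icc_eq_empty (by omega)]
      simp
  | succ n ih =>
      intro j c h
      rw [zBiC_unroll v μ L U m (n + 1) j c h, zMuC_eq]
      congr 1
      apply Finset.sum_congr rfl
      intro j' hj'
      have := Finset.mem_Icc.mp hj'
      rw [ih j' (c + 1) (by omega)]

/-- With the same alternative order and scale parameters depending only on the
count `c`, the nested recursive logit value functions on the Binary-Choice and
Multi-Choice DAGs coincide at every node `p^c_j` present in both DAGs. -/
theorem nested_values_BiC_eq_MuC (m L U : ℕ) (hL : 1 ≤ L) (hLU : L ≤ U) (hUm : U ≤ m)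
    (v μ : ℕ → ℝ) (hμ : ∀ c, 0 < μ c) :
    ∀ j c : ℕ, j ≤ m → c ≤ j → c ≤ U → (1 ≤ c ∨ j = 0) →
      zBiC v μ L U m j c = zMuC v μ L U m j c := by
  intro j c _ _ _ _
  exact zBiC_eq_zMuC v μ L U m (m - j) j c le_rfl
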